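/- Let X be a shift space, φ a one-block flip for (X, σ_X) with symbol map τ (writing a* = τ(a) for symbols and w* for the reversed block with τ applied letterwise), and N ≥ 1. Then the map φ^[N] : X^[N] → X^[N] defined by φ^[N](y)_i = (y_{−i})* is a one-block flip for the N-th higher block system (X^[N], σ_{X^[N]}); if N is odd, (X^[N], σ_{X^[N]}, φ^[N]) is conjugate to (X, σ_X, φ), and if N is even, it is conjugate to (X, σ_X, σ_X∘φ). -/

import Mathlib

open Set Function

/-- The map `x ↦ σᵐ(x)` on the full shift `A^ℤ`, where `σᵐ(x)_i = x_{i+m}`. -/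
def shiftZ (A : Type*) (m : ℤ) : (ℤ → A) → ℤ → A := fun x i => x (i + m)

/-- The shift map `σ` on the full shift `A^ℤ`: `σ(x)_i = x_{i+1}`. -/
abbrev shiftMap (A : Type*) : (ℤ → A) → ℤ → A := shiftZ A 1

/-- The inverse shift map `σ⁻¹`: `σ⁻¹(x)_i = x_{i-1}`. -/
abbrev shiftInv (A : Type*) : (ℤ → A) → ℤ → A := shiftZ A (-1)

/-- The reversal map `ρ`: `ρ(x)_i = x_{-i}`. -/
def revMap (A : Type*) : (ℤ → A) → ℤ → A := fun x i => x (-i)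

/-- A shift space over `A`: a nonempty closed subset of `A^ℤ` with `σ(X) = X`. -/
def IsShiftSpace {A : Type*} [TopologicalSpace A] (X : Set (ℤ → A)) : Prop :=
  X.Nonempty ∧ IsClosed X ∧ shiftMap A '' X = X

/-- The word `w` occurs in `x` at position `i`, i.e. `x_{[i, i+|w|-1]} = w`. -/
def OccursAt {A : Type*} (w : List A) (x : ℤ → A) (i : ℤ) : Prop :=
  ∀ k : Fin w.length, x (i + (k : ℕ)) = w.get k

/-- `w` is a block of `X`: it occurs in some point of `X`. -/
def IsBlockOf {A : Type*} (X : Set (ℤ → A)) (w : List A) : Prop :=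
  ∃ x ∈ X, ∃ i : ℤ, OccursAt w x i

/-- `X` is irreducible: any two blocks can be joined by a block. -/
def ShiftIrreducible {A : Type*} (X : Set (ℤ → A)) : Prop :=
  ∀ u v : List A, IsBlockOf X u → IsBlockOf X v → ∃ w : List A, IsBlockOf X (u ++ w ++ v)

/-- `w` is a finitary (intrinsically synchronizing) block of `X`. -/
def IsFinitary {A : Type*} (X : Set (ℤ → A)) (w : List A) : Prop :=
  IsBlockOf X w ∧ ∀ u v : List A, IsBlockOf X (u ++ w) → IsBlockOf X (w ++ v) →
    IsBlockOf X (u ++ w ++ v)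

/-- A synchronized system: an irreducible shift space with a finitary block. -/
def IsSynchronized {A : Type*} [TopologicalSpace A] (X : Set (ℤ → A)) : Prop :=
  IsShiftSpace X ∧ ShiftIrreducible X ∧ ∃ w : List A, IsFinitary X w

/-- `φ` (as a map of the ambient full shift) restricts to a flip for `(X, σ_X)`:
a homeomorphism `X → X` with `φ ∘ φ = id` and `φ ∘ σ_X = σ_X⁻¹ ∘ φ`.
(Being a homeomorphism is automatic from continuity and `φ ∘ φ = id` on `X`.) -/
def IsFlip {A : Type*} [TopologicalSpace A] (X : Set (ℤ → A))
    (φ : (ℤ → A) → ℤ → A) : Prop :=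
  MapsTo φ X X ∧ ContinuousOn φ X ∧ (∀ x ∈ X, φ (φ x) = x) ∧
    ∀ x ∈ X, φ (shiftMap A x) = shiftInv A (φ x)

/-- The shift-flip systems `(X, σ_X, φ)` and `(Y, σ_Y, ψ)` are conjugate:
there is a homeomorphism `Φ : X → Y` with `Φ ∘ σ_X = σ_Y ∘ Φ` and `Φ ∘ φ = ψ ∘ Φ`. -/
def SystemConj {A B : Type*} [TopologicalSpace A] [TopologicalSpace B]
    (X : Set (ℤ → A)) (φ : (ℤ → A) → ℤ → A)
    (Y : Set (ℤ → B)) (ψ : (ℤ → B) → ℤ → B) : Prop :=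
  ∃ (Φ : (ℤ → A) → ℤ → B) (Ψ : (ℤ → B) → ℤ → A),
    MapsTo Φ X Y ∧ ContinuousOn Φ X ∧ MapsTo Ψ Y X ∧ ContinuousOn Ψ Y ∧
    InvOn Ψ Φ X Y ∧
    (∀ x ∈ X, Φ (shiftMap A x) = shiftMap B (Φ x)) ∧ ∀ x ∈ X, Φ (φ x) = ψ (Φ x)

/-- Two flips `φ, φ'` for `(X, σ_X)` are conjugate. -/
def FlipConj {A : Type*} [TopologicalSpace A] (X : Set (ℤ → A))
    (φ φ' : (ℤ → A) → ℤ → A) : Prop :=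
  SystemConj X φ X φ'

/-- `F(φ; n) = {x ∈ X : σ_X^n(x) = x and φ(x) = x}`. -/
def flipFix {A : Type*} (X : Set (ℤ → A)) (φ : (ℤ → A) → ℤ → A) (n : ℕ) :
    Set (ℤ → A) :=
  {x ∈ X | (shiftMap A)^[n] x = x ∧ φ x = x}

/-- `A(φ)`: points of `X` in which some finitary block occurs infinitely often and
which differ from their `φ`-image in at least one but only finitely many coordinates. -/
def flipAsym {A : Type*} (X : Set (ℤ → A)) (φ : (ℤ → A) → ℤ → A) :
    Set (ℤ → A) :=
  {x ∈ X | (∃ w : List A, IsFinitary X w ∧ {i : ℤ | OccursAt w x i}.Infinite) ∧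
    {i : ℤ | φ x i ≠ x i}.Nonempty ∧ {i : ℤ | φ x i ≠ x i}.Finite}

/-- `x` is a bi-infinite concatenation of words from `C`. -/
def IsConcat {A : Type*} (C : Set (List A)) (x : ℤ → A) : Prop :=
  ∃ t : ℤ → ℤ, StrictMono t ∧ (∀ n : ℤ, ∃ j : ℤ, t j ≤ n ∧ n < t (j + 1)) ∧
    ∀ j : ℤ, ∃ w ∈ C, t (j + 1) = t j + w.length ∧ OccursAt w x (t j)

/-- A coded system: a shift space in which the set of bi-infinite concatenations of
words from some code `C` is dense. -/
def IsCoded {A : Type*} [TopologicalSpace A] (X : Set (ℤ → A)) : Prop :=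
  IsShiftSpace X ∧ ∃ C : Set (List A), closure {x | IsConcat C x} = X

/-- The map `β_N` onto the `N`-th higher block presentation: `β_N(x)_i = x_{[i, i+N-1]}`. -/
def betaN (A : Type*) (N : ℕ) : (ℤ → A) → ℤ → (Fin N → A) :=
  fun x i k => x (i + (k : ℕ))

/-- The `*`-operation on `N`-blocks: reverse the block and apply `τ` letterwise. -/
def starBlock {A : Type*} (τ : A → A) (N : ℕ) (u : Fin N → A) : Fin N → A :=
  fun k => τ (u k.rev)

/-- The map `φ^[N]` on the `N`-th higher block system: `φ^[N](y)_i = (y_{-i})*`. -/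
def flipN {A : Type*} (τ : A → A) (N : ℕ) :
    (ℤ → (Fin N → A)) → ℤ → (Fin N → A) :=
  fun y i => starBlock τ N (y (-i))

lemma shiftZ_shiftZ {A : Type*} (m n : ℤ) (x : ℤ → A) :
    shiftZ A m (shiftZ A n x) = shiftZ A (n + m) x := by
  funext i
  show x (i + m + n) = x (i + (n + m))
  ring_nf

lemma shiftZ_mem {A : Type*} [TopologicalSpace A] {X : Set (ℤ → A)}
    (hσ : shiftMap A '' X = X) (m : ℤ) {x : ℤ → A} (hx : x ∈ X) :
    shiftZ A m x ∈ X := by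
  induction m using Int.induction_on with
  | zero =>
      have h : shiftZ A 0 x = x := by funext i; show x (i + 0) = x i; rw [add_zero]
      rw [h]; exact hx
  | succ k ih =>
      have h1 : shiftZ A 1 (shiftZ A k x) ∈ shiftMap A '' X := ⟨_, ih, rfl⟩
      rw [hσ] at h1
      have h2 : shiftZ A 1 (shiftZ A (k : ℤ) x) = shiftZ A ((k : ℤ) + 1) x :=
        shiftZ_shiftZ 1 k x
      rwa [h2] at h1
  | pred k ih =>
      have h1 : shiftZ A (-k) x ∈ shiftMap A '' X := by rw [hσ]; exact ih
      obtain ⟨z, hz, hzx⟩ := h1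
      have h2 : z = shiftZ A (-(k : ℤ) - 1) x := by
        funext i
        have h3 := congrFun hzx (i + -1)
        show z i = x (i + (-(k : ℤ) - 1))
        calc z i = z (i + -1 + 1) := by ring_nf
          _ = shiftZ A (-(k : ℤ)) x (i + -1) := h3
          _ = x (i + (-(k : ℤ) - 1)) := by show x (i + -1 + -(k:ℤ)) = _; ring_nf
      rw [← h2]
      exact hz

/-- Let `φ` be a one-block flip for `(X, σ_X)` with symbol map `τ` and let `N ≥ 1`.
Then `φ^[N]` is a one-block flip for the `N`-th higher block system
`(X^[N], σ_{X^[N]})`; if `N` is odd, `(X^[N], σ_{X^[N]}, φ^[N])` is conjugate to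
`(X, σ_X, φ)`, and if `N` is even, it is conjugate to `(X, σ_X, σ_X ∘ φ)`. -/
theorem higher_block_flip
    {A : Type*} [Fintype A] [TopologicalSpace A] [DiscreteTopology A]
    (X : Set (ℤ → A)) (hX : IsShiftSpace X)
    (φ : (ℤ → A) → ℤ → A) (hφ : IsFlip X φ)
    (τ : A → A) (hτ : ∀ x ∈ X, ∀ i : ℤ, φ x i = τ (x (-i)))
    (N : ℕ) (hN : 1 ≤ N) :
    IsFlip (betaN A N '' X) (flipN τ N) ∧
    (∀ y ∈ betaN A N '' X, ∀ i : ℤ, flipN τ N y i = starBlock τ N (y (-i))) ∧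
    (Odd N → SystemConj (betaN A N '' X) (flipN τ N) X φ) ∧
    (Even N → SystemConj (betaN A N '' X) (flipN τ N) X (shiftMap A ∘ φ)) := by
  obtain ⟨hne, hcl, hσ⟩ := hX
  obtain ⟨hmt, hct, hinv, hcomm⟩ := hφ
  have hmem : ∀ (m : ℤ) {x : ℤ → A}, x ∈ X → shiftZ A m x ∈ X :=
    fun m {x} hx => shiftZ_mem hσ m hx
  have httau : ∀ x ∈ X, ∀ a : ℤ, τ (τ (x a)) = x a := by
    intro x hx a
    have h2 := hτ (φ x) (hmt hx) a
    rw [hinv x hx] at h2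
    rw [hτ x hx (-a), neg_neg] at h2
    exact h2.symm
  have hτc : Continuous τ := continuous_of_discreteTopology
  -- key structural lemma
  have hkey : ∀ x ∈ X, flipN τ N (betaN A N x)
      = betaN A N (shiftZ A (1 - N) (φ x)) := by
    intro x hx
    funext i k
    show τ (x (-i + ((Fin.rev k : Fin N) : ℕ))) = φ x (i + (k : ℕ) + (1 - N))
    rw [hτ x hx]
    have hrev : ((Fin.rev k : Fin N) : ℕ) = N - ((k : ℕ) + 1) := rfl
    have hlt := k.is_lt
    have hidx : -i + (((Fin.rev k : Fin N) : ℕ) : ℤ)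
        = -(i + ((k : ℕ) : ℤ) + (1 - (N : ℤ))) := by rw [hrev]; omega
    rw [hidx]
  have hflipc : Continuous (flipN τ N) := by
    refine continuous_pi fun i => continuous_pi fun k => ?_
    show Continuous fun y : ℤ → Fin N → A => τ (y (-i) (Fin.rev k))
    exact hτc.comp ((continuous_apply (Fin.rev k)).comp (continuous_apply (-i)))
  -- a general conjugacy constructor
  have hconjparts : ∀ m : ℤ, ∀ ψ : (ℤ → A) → ℤ → A,
      (∀ x ∈ X, ∀ i : ℤ, ψ (shiftZ A m x) i = τ (x ((N : ℤ) - 1 - m - i))) →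
      SystemConj (betaN A N '' X) (flipN τ N) X ψ := by
    intro m ψ hψ
    set Φ : (ℤ → Fin N → A) → ℤ → A := fun y i => y (i + m) ⟨0, hN⟩ with hΦ
    have hΦβ : ∀ x : ℤ → A, Φ (betaN A N x) = shiftZ A m x := by
      intro x; funext i
      show x (i + m + ((0 : ℕ) : ℤ)) = x (i + m)
      norm_num
    refine ⟨Φ, fun x => betaN A N (shiftZ A (-m) x), ?_, ?_, ?_, ?_, ⟨?_, ?_⟩, ?_, ?_⟩
    · rintro y ⟨x, hx, rfl⟩
      rw [hΦβ]; exact hmem m hx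
    · refine (continuous_pi fun i => ?_).continuousOn
      exact ((continuous_apply (⟨0, hN⟩ : Fin N)).comp (continuous_apply (i + m)))
    · intro x hx
      exact ⟨_, hmem (-m) hx, rfl⟩
    · refine (continuous_pi fun i => continuous_pi fun k => ?_).continuousOn
      show Continuous fun x : ℤ → A => x (i + (k : ℕ) + -m)
      exact continuous_apply _
    · rintro y ⟨x, hx, rfl⟩
      rw [hΦβ]
      funext i k
      show x (i + (k : ℕ) + -m + m) = x (i + (k : ℕ))
      have hidx : i + (k : ℕ) + -m + m = i + (k : ℕ) := by ring
      rw [hidx]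
    · intro x hx
      funext i
      show x (i + m + ((0 : ℕ) : ℤ) + -m) = x i
      norm_num
    · rintro y ⟨x, hx, rfl⟩
      funext i
      show (betaN A N x) (i + m + 1) ⟨0, hN⟩ = (betaN A N x) (i + 1 + m) ⟨0, hN⟩
      have : i + m + 1 = i + 1 + m := by ring
      rw [this]
    · rintro y ⟨x, hx, rfl⟩
      rw [hkey x hx, hΦβ, hΦβ]
      funext i
      rw [hψ x hx i]
      show φ x (i + m + (1 - N)) = τ (x ((N : ℤ) - 1 - m - i))
      rw [hτ x hx]
      have hidx : -(i + m + (1 - (N : ℤ))) = (N : ℤ) - 1 - m - i := by ring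
      rw [hidx]
  refine ⟨⟨?_, hflipc.continuousOn, ?_, ?_⟩, fun y _ i => rfl, ?_, ?_⟩
  · rintro y ⟨x, hx, rfl⟩
    rw [hkey x hx]
    exact ⟨_, hmem _ (hmt hx), rfl⟩
  · rintro y ⟨x, hx, rfl⟩
    funext i k
    show τ ((flipN τ N (betaN A N x)) (-i) (Fin.rev k)) = x (i + (k : ℕ))
    simp only [flipN, starBlock, betaN, neg_neg, Fin.rev_rev]
    exact httau x hx _
  · rintro y ⟨x, hx, rfl⟩
    funext i
    show starBlock τ N ((betaN A N x) (-i + 1)) = starBlock τ N ((betaN A N x) (-(i + -1)))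
    have : -i + 1 = -(i + -1) := by ring
    rw [this]
  · rintro ⟨t, ht⟩
    refine hconjparts t φ ?_
    intro x hx i
    rw [hτ (shiftZ A t x) (hmem t hx)]
    show τ (x (-i + t)) = τ (x ((N : ℤ) - 1 - t - i))
    have hidx : -i + (t : ℤ) = (N : ℤ) - 1 - t - i := by omega
    rw [hidx]
  · rintro ⟨t, ht⟩
    refine hconjparts t (shiftMap A ∘ φ) ?_
    intro x hx i
    show φ (shiftZ A t x) (i + 1) = τ (x ((N : ℤ) - 1 - t - i))
    rw [hτ (shiftZ A t x) (hmem t hx)]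
    show τ (x (-(i + 1) + t)) = τ (x ((N : ℤ) - 1 - t - i))
    have hidx : -(i + 1) + (t : ℤ) = (N : ℤ) - 1 - t - i := by omega
    rw [hidx]
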